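/- In the reduction from Set Multicover, if I ⊆ [n] is a family of at most k sets such that every element i ∈ [m] belongs to at least b sets S_j with j ∈ I, then the constructed graph (element vertices v_i with capacity deg(v_i)−b and k'+1 pendant leaves, set vertices u_j with capacity deg(u_j), edges v_i u_j for i ∈ S_j) admits a capacitated vertex cover of size at most k' = m + k, namely X = {v_i : i ∈ [m]} ∪ {u_j : j ∈ I}. -/
import Mathlib


open Sum

/-- Vertices of the Set Multicover reduction graph: element vertices, set vertices,
and `k'+1` pendant leaves per element vertex. -/
abbrev SMCVert (m n k' : ℕ) := Fin m ⊕ Fin n ⊕ (Fin m × Fin (k' + 1))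

/-- The reduction graph: edges `v_i u_j` whenever `i ∈ S_j`, and each element
vertex `v_i` adjacent to its `k'+1` private leaves. -/
def SMCGraph (m n k' : ℕ) (S : Fin n → Finset (Fin m)) :
    SimpleGraph (SMCVert m n k') :=
  SimpleGraph.fromRel (fun a b =>
    match a, b with
    | inl i, inr (inl j) => i ∈ S j
    | inl i, inr (inr (i', _)) => i = i'
    | _, _ => False)

/-- Capacities: `c(v_i) = deg(v_i) − b`, `c(u_j) = deg(u_j)`, leaves have capacity 1. -/
noncomputable def SMCcap (m n k' b : ℕ) (S : Fin n → Finset (Fin m)) :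
    SMCVert m n k' → ℕ
  | inl i => ((SMCGraph m n k' S).neighborSet (inl i)).ncard - b
  | inr (inl j) => ((SMCGraph m n k' S).neighborSet (inr (inl j))).ncard
  | inr (inr _) => 1

/-- Capacitated vertex cover: every edge is assigned to an endpoint lying in `X`,
and every vertex of `X` receives at most its capacity. -/
def IsCVC {V : Type*} (G : SimpleGraph V) (c : V → ℕ) (X : Set V)
    (f : Sym2 V → V) : Prop :=
  (∀ e ∈ G.edgeSet, f e ∈ e ∧ f e ∈ X) ∧
  ∀ v ∈ X, {e ∈ G.edgeSet | f e = v}.ncard ≤ c v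

section Aux

variable {m n k' : ℕ}

/-- The assignment function on ordered pairs. -/
def smcG (I : Finset (Fin n)) : SMCVert m n k' → SMCVert m n k' → SMCVert m n k'
  | inl i, inl i' => inl (min i i')
  | inl i, inr (inl j) => if j ∈ I then inr (inl j) else inl i
  | inl i, inr (inr _) => inl i
  | inr (inl j), inl i => if j ∈ I then inr (inl j) else inl i
  | inr (inl j), inr (inl j') => inr (inl (min j j'))
  | inr (inl j), inr (inr _) => inr (inl j)
  | inr (inr _), inl i => inl i
  | inr (inr _), inr (inl j) => inr (inl j)
  | inr (inr p), inr (inr q) => inr (inr (min p.1 q.1, min p.2 q.2))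

lemma smcG_comm (I : Finset (Fin n)) (a b : SMCVert m n k') :
    smcG I a b = smcG I b a := by
  rcases a with i | j | p <;> rcases b with i' | j' | q <;>
    simp [smcG, min_comm]

/-- The assignment function on unordered pairs. -/
def smcf (I : Finset (Fin n)) : Sym2 (SMCVert m n k') → SMCVert m n k' :=
  Sym2.lift ⟨smcG I, smcG_comm I⟩

lemma smcf_mk (I : Finset (Fin n)) (a b : SMCVert m n k') :
    smcf I s(a, b) = smcG I a b := rfl

/-- Characterization of the edges of the reduction graph. -/
lemma smc_adj (S : Fin n → Finset (Fin m)) {a b : SMCVert m n k'}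
    (h : (SMCGraph m n k' S).Adj a b) :
    (∃ i j, i ∈ S j ∧ ((a = inl i ∧ b = inr (inl j)) ∨ (b = inl i ∧ a = inr (inl j)))) ∨
    (∃ i t, (a = inl i ∧ b = inr (inr (i, t))) ∨ (b = inl i ∧ a = inr (inr (i, t)))) := by
  rw [SMCGraph, SimpleGraph.fromRel_adj] at h
  obtain ⟨hne, h | h⟩ := h <;>
    rcases a with i | j | p <;> rcases b with i' | j' | q <;> simp_all <;>
    exact ⟨_, rfl⟩

lemma smc_adj_set (S : Fin n → Finset (Fin m)) {i : Fin m} {j : Fin n}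
    (h : i ∈ S j) : (SMCGraph m n k' S).Adj (inl i) (inr (inl j)) := by
  rw [SMCGraph, SimpleGraph.fromRel_adj]
  exact ⟨by simp, Or.inl h⟩

lemma smcG_mem (I : Finset (Fin n)) (S : Fin n → Finset (Fin m))
    {a b : SMCVert m n k'} (h : (SMCGraph m n k' S).Adj a b) :
    smcG I a b = a ∨ smcG I a b = b := by
  rcases smc_adj S h with ⟨i, j, _, ⟨rfl, rfl⟩ | ⟨rfl, rfl⟩⟩ |
    ⟨i, t, ⟨rfl, rfl⟩ | ⟨rfl, rfl⟩⟩ <;>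
    first
    | (simp only [smcG]; split <;> simp)
    | simp [smcG]

/-- Edges assigned to `v` are images of neighbours under `w ↦ s(v,w)`. -/
lemma assigned_subset (G : SimpleGraph (SMCVert m n k')) (I : Finset (Fin n))
    (S : Fin n → Finset (Fin m)) (hG : G = SMCGraph m n k' S) (v : SMCVert m n k') :
    {e ∈ G.edgeSet | smcf I e = v} ⊆
      (fun w => s(v, w)) '' {w | G.Adj v w ∧ smcf I s(v, w) = v} := by
  subst hG
  intro e he
  obtain ⟨he, hfe⟩ := he
  induction e using Sym2.ind with
  | _ a b =>
    rw [SimpleGraph.mem_edgeSet] at he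
    rcases smcG_mem I S he with h | h <;> rw [smcf_mk] at hfe
    · obtain rfl : v = a := (h.symm.trans hfe).symm
      exact ⟨b, ⟨he, by rw [smcf_mk]; exact hfe⟩, rfl⟩
    · obtain rfl : v = b := (h.symm.trans hfe).symm
      exact ⟨a, ⟨he.symm, by rw [Sym2.eq_swap, smcf_mk]; exact hfe⟩,
        by simp [Sym2.eq_swap]⟩

lemma assigned_ncard_le (G : SimpleGraph (SMCVert m n k')) (I : Finset (Fin n))
    (S : Fin n → Finset (Fin m)) (hG : G = SMCGraph m n k' S) (v : SMCVert m n k') :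
    {e ∈ G.edgeSet | smcf I e = v}.ncard ≤
      {w | G.Adj v w ∧ smcf I s(v, w) = v}.ncard := by
  refine le_trans (Set.ncard_le_ncard (assigned_subset G I S hG v) (Set.toFinite _)) ?_
  rw [Set.ncard_image_of_injective _ (fun w w' h => Sym2.congr_right.mp h)]

end Aux

/-- If `I` is a multicover of size at most `k`, then `X = {v_i} ∪ {u_j : j ∈ I}` is a
capacitated vertex cover of the reduction graph of size at most `k' = m + k`. -/
theorem stmt11 (m n b k : ℕ) (S : Fin n → Finset (Fin m))
    (I : Finset (Fin n)) (hI : I.card ≤ k)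
    (hcov : ∀ i : Fin m, b ≤ (I.filter (fun j => i ∈ S j)).card) :
    ∃ f : Sym2 (SMCVert m n (m + k)) → SMCVert m n (m + k),
      IsCVC (SMCGraph m n (m + k) S) (SMCcap m n (m + k) b S)
        ({v | ∃ i : Fin m, v = inl i} ∪ {v | ∃ j ∈ I, v = inr (inl j)}) f ∧
      ({v | ∃ i : Fin m, v = inl i} ∪
        {v | ∃ j ∈ I, v = inr (inl j)} : Set (SMCVert m n (m + k))).ncard ≤ m + k := by
  classical
  set k' := m + k with hk'
  set G := SMCGraph m n k' S with hG
  set X : Set (SMCVert m n k') :=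
    {v | ∃ i : Fin m, v = inl i} ∪ {v | ∃ j ∈ I, v = inr (inl j)} with hX
  refine ⟨smcf I, ⟨?_, ?_⟩, ?_⟩
  · -- every edge assigned to an endpoint in X
    intro e he
    induction e using Sym2.ind with
    | _ a b =>
      rw [SimpleGraph.mem_edgeSet] at he
      rcases smc_adj S he with ⟨i, j, hij, ⟨rfl, rfl⟩ | ⟨rfl, rfl⟩⟩ |
        ⟨i, t, ⟨rfl, rfl⟩ | ⟨rfl, rfl⟩⟩ <;>
        rw [smcf_mk] <;> simp only [smcG]
      · by_cases hj : j ∈ I <;> simp [hj, hX]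
      · by_cases hj : j ∈ I <;> simp [hj, hX]
      · simp [hX]
      · simp [hX]
  · -- capacity constraints
    intro v hv
    rcases hv with ⟨i, rfl⟩ | ⟨j, hj, rfl⟩
    · -- element vertex v_i
      refine le_trans (assigned_ncard_le G I S hG (inl i)) ?_
      set D : Set (SMCVert m n k') :=
        (fun j => inr (inl j)) '' {j : Fin n | j ∈ I ∧ i ∈ S j} with hD
      have hDsub : D ⊆ G.neighborSet (inl i) := by
        rintro _ ⟨j, ⟨hjI, hjS⟩, rfl⟩
        exact smc_adj_set S hjS
      have hsub : {w | G.Adj (inl i) w ∧ smcf I s(inl i, w) = inl i} ⊆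
          G.neighborSet (inl i) \ D := by
        rintro w ⟨hadj, hfw⟩
        refine ⟨hadj, ?_⟩
        rintro ⟨j, ⟨hjI, hjS⟩, rfl⟩
        rw [smcf_mk] at hfw
        simp [smcG, hjI] at hfw
      have hDcard : b ≤ D.ncard := by
        rw [hD, Set.ncard_image_of_injective _ (fun a a' h => by simpa using h)]
        have : {j : Fin n | j ∈ I ∧ i ∈ S j} = ↑(I.filter (fun j => i ∈ S j)) := by
          ext j; simp
        rw [this, Set.ncard_coe_finset]
        exact hcov i
      calc {w | G.Adj (inl i) w ∧ smcf I s(inl i, w) = inl i}.ncard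
          ≤ (G.neighborSet (inl i) \ D).ncard :=
            Set.ncard_le_ncard hsub (Set.toFinite _)
        _ = (G.neighborSet (inl i)).ncard - D.ncard :=
            Set.ncard_diff hDsub (Set.toFinite _)
        _ ≤ (G.neighborSet (inl i)).ncard - b := Nat.sub_le_sub_left hDcard _
        _ = SMCcap m n k' b S (inl i) := by simp [SMCcap, hG]
    · -- set vertex u_j, j ∈ I
      refine le_trans (assigned_ncard_le G I S hG (inr (inl j))) ?_
      have hsub : {w | G.Adj (inr (inl j)) w ∧ smcf I s(inr (inl j), w) = inr (inl j)} ⊆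
          G.neighborSet (inr (inl j)) := fun w hw => hw.1
      calc {w | G.Adj (inr (inl j)) w ∧ smcf I s(inr (inl j), w) = inr (inl j)}.ncard
          ≤ (G.neighborSet (inr (inl j))).ncard :=
            Set.ncard_le_ncard hsub (Set.toFinite _)
        _ = SMCcap m n k' b S (inr (inl j)) := by simp [SMCcap, hG]
  · -- size bound
    have h1 : {v : SMCVert m n k' | ∃ i : Fin m, v = inl i} = Set.range inl := by
      ext v; simp [eq_comm]
    have h2 : {v : SMCVert m n k' | ∃ j ∈ I, v = inr (inl j)} =
        (fun j => inr (inl j)) '' ↑I := by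
      ext v
      constructor
      · rintro ⟨j, hj, rfl⟩; exact ⟨j, hj, rfl⟩
      · rintro ⟨j, hj, rfl⟩; exact ⟨j, hj, rfl⟩
    rw [hX, h1, h2]
    refine le_trans (Set.ncard_union_le _ _) ?_
    have hr : (Set.range (inl : Fin m → SMCVert m n k')).ncard = m := by
      rw [← Set.image_univ,
        Set.ncard_image_of_injective _ (fun a a' h => by simpa using h),
        Set.ncard_univ]
      simp
    have hi : ((fun j => inr (inl j)) '' (↑I : Set (Fin n)) :
        Set (SMCVert m n k')).ncard = I.card := by
      rw [Set.ncard_image_of_injective _ (fun a a' h => by simpa using h),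
        Set.ncard_coe_finset]
    rw [hr, hi]
    exact Nat.add_le_add_left hI m
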